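/- Let P have rows λ¹, …, λ^{r+1} and set ℓ^j_i = λ^j_i − i + 1; let P̃ be obtained by increasing position i₀ of rows i₀, …, j₀−1 by 1, with corresponding ℓ̃^j_i. Then for all (j, i) ≠ (j₀, i₀) with 1 ≤ i < j ≤ r+1: ∏_{p=i}^{j-1} (ℓ̃^{j-1}_i − ℓ̃^{j-1}_p)! / (ℓ̃^j_i − ℓ̃^{j-1}_p)! = ∏_{p=i}^{j-1} (ℓ^{j-1}_i − ℓ^{j-1}_p)! / (ℓ^j_i − ℓ^{j-1}_p)!. -/
import Mathlib


/-- A Gelfand–Tsetlin pattern for `sl_{r+1}`: rows are indexed `1,…,r+1`,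
row `j` has entries `P j 1 ≥ … ≥ P j j`, with the interlacing condition
`P j i ≥ P (j-1) i ≥ P j (i+1)` for `1 ≤ i < j ≤ r+1`. -/
def IsGTPattern (r : ℕ) (P : ℕ → ℕ → ℤ) : Prop :=
  ∀ i j, 1 ≤ i → i < j → j ≤ r + 1 → P (j-1) i ≤ P j i ∧ P j (i+1) ≤ P (j-1) i

/-- The bounding sequence (last row) of the pattern is `lam`. -/
def Bounded (r : ℕ) (P : ℕ → ℕ → ℤ) (lam : ℕ → ℤ) : Prop :=
  ∀ i, 1 ≤ i → i ≤ r + 1 → P (r+1) i = lam i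

/-- Row-wise dominance: `Dom r P' P` means the partial row sums of `P'`
dominate those of `P` in every row. -/
def Dom (r : ℕ) (P' P : ℕ → ℕ → ℤ) : Prop :=
  ∀ j i, 1 ≤ i → i ≤ j → j ≤ r + 1 →
    ∑ s ∈ Finset.Icc 1 i, P j s ≤ ∑ s ∈ Finset.Icc 1 i, P' j s

/-- The `k`-th coordinate of the weight of a pattern: difference of row sums. -/
def wt (P : ℕ → ℕ → ℤ) (k : ℕ) : ℤ :=
  (∑ i ∈ Finset.Icc 1 k, P k i) - ∑ i ∈ Finset.Icc 1 (k-1), P (k-1) i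

/-- The length of a pattern. -/
def lengthP (r : ℕ) (P : ℕ → ℕ → ℤ) : ℤ :=
  ∑ j ∈ Finset.Icc 2 (r+1), ∑ i ∈ Finset.Icc 1 (j-1), (P j i - P (j-1) i)

/-- The GT-coefficient factorial products, formed with ℓ j i = P j i - i + 1,
agree for P and Pt at every (j, i) ≠ (j₀, i₀) with 1 ≤ i < j ≤ r+1. -/
theorem factorial_products_agree (r : ℕ) (lam : ℕ → ℤ) (P Pt : ℕ → ℕ → ℤ) (i₀ j₀ : ℕ)
    (hP : IsGTPattern r P) (hb : Bounded r P lam)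
    (hlen : 0 < lengthP r P)
    (hj₀2 : 2 ≤ j₀) (hj₀r : j₀ ≤ r + 1)
    (hj₀d : ∃ i, 1 ≤ i ∧ i < j₀ ∧ P j₀ i ≠ P (j₀-1) i)
    (hjmin : ∀ j, 2 ≤ j → j < j₀ → ∀ i, 1 ≤ i → i < j → P j i = P (j-1) i)
    (hi₀1 : 1 ≤ i₀) (hi₀j : i₀ < j₀) (hi₀d : P j₀ i₀ ≠ P (j₀-1) i₀)
    (himin : ∀ i, 1 ≤ i → i < i₀ → P j₀ i = P (j₀-1) i)
    (hPt : ∀ j i, Pt j i = if i = i₀ ∧ i₀ ≤ j ∧ j < j₀ then P j i + 1 else P j i) :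
    ∀ j i, 1 ≤ i → i < j → j ≤ r + 1 → ¬(j = j₀ ∧ i = i₀) →
      (∏ p ∈ Finset.Icc i (j-1),
        ((((Pt (j-1) i - i + 1) - (Pt (j-1) p - p + 1)).toNat.factorial : ℚ) /
         (((Pt j i - i + 1) - (Pt (j-1) p - p + 1)).toNat.factorial : ℚ))) =
      ∏ p ∈ Finset.Icc i (j-1),
        ((((P (j-1) i - i + 1) - (P (j-1) p - p + 1)).toNat.factorial : ℚ) /
         (((P j i - i + 1) - (P (j-1) p - p + 1)).toNat.factorial : ℚ)) := by
  intro j i hi hij hjr hne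
  by_cases hcase : j < j₀ ∨ (j = j₀ ∧ i < i₀)
  · have hPj : P j i = P (j-1) i := by
      rcases hcase with h | ⟨h1, h2⟩
      · exact hjmin j (by omega) h i hi hij
      · subst h1; exact himin i hi h2
    have hPtj : Pt j i = Pt (j-1) i := by
      rw [hPt, hPt]
      split_ifs <;> omega
    trans (1 : ℚ)
    · apply Finset.prod_eq_one
      intro p hp
      rw [hPtj]
      exact div_self (Nat.cast_ne_zero.mpr (Nat.factorial_ne_zero _))
    · symm
      apply Finset.prod_eq_one
      intro p hp
      rw [hPj]
      exact div_self (Nat.cast_ne_zero.mpr (Nat.factorial_ne_zero _))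
  · apply Finset.prod_congr rfl
    intro p hp
    have hp' := Finset.mem_Icc.mp hp
    have e1 : Pt (j-1) i = P (j-1) i := by rw [hPt]; split_ifs <;> omega
    have e2 : Pt j i = P j i := by rw [hPt]; split_ifs <;> omega
    have e3 : Pt (j-1) p = P (j-1) p := by rw [hPt]; split_ifs <;> omega
    rw [e1, e2, e3]
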